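/- Let 0 < ε ≤ 1. Define G(ε,m,T) = (1/T)·ln((m²b⁴ + 2b² + m² + m(b² − 1)√C)/(2(1 + m²)b²)) − 2(m + ε), where b = e^{T√(1+m²)} and C = m²b⁴ + 2m²b² + 4b² + m² (the explicit expression for Δ(ε,m,T)). Then: (i) for every fixed m > 0, lim_{T→0⁺} G(ε,m,T) = −2ε; (ii) for every fixed T > 0, lim_{m→0⁺} G(ε,m,T) = −2ε and lim_{m→+∞} G(ε,m,T) = −2ε. -/

import Mathlib

open Real Filter Set

/-- The explicit closed-form expression `G(ε,m,T)` for `Δ(ε,m,T)`. -/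
noncomputable def Gval (ε m T : ℝ) : ℝ :=
  let b := Real.exp (T * Real.sqrt (1 + m ^ 2))
  let C := m ^ 2 * b ^ 4 + 2 * m ^ 2 * b ^ 2 + 4 * b ^ 2 + m ^ 2
  (1 / T) * Real.log ((m ^ 2 * b ^ 4 + 2 * b ^ 2 + m ^ 2 +
    m * (b ^ 2 - 1) * Real.sqrt C) / (2 * (1 + m ^ 2) * b ^ 2)) - 2 * (m + ε)

lemma part1 (ε : ℝ) (m : ℝ) (hm : 0 < m) :
    Filter.Tendsto (fun T => Gval ε m T) (nhdsWithin 0 (Set.Ioi 0))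
      (nhds (-(2 * ε))) := by
  set s : ℝ := Real.sqrt (1 + m ^ 2) with hs_def
  have h1m : (0:ℝ) < 1 + m ^ 2 := by positivity
  have hs2 : s ^ 2 = 1 + m ^ 2 := Real.sq_sqrt h1m.le
  have hs : 0 < s := Real.sqrt_pos.mpr h1m
  set N : ℝ → ℝ := fun T =>
    m ^ 2 * Real.exp (T * s) ^ 4 + 2 * Real.exp (T * s) ^ 2 + m ^ 2 +
    m * (Real.exp (T * s) ^ 2 - 1) *
      Real.sqrt (m ^ 2 * Real.exp (T * s) ^ 4 + 2 * m ^ 2 * Real.exp (T * s) ^ 2 +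
        4 * Real.exp (T * s) ^ 2 + m ^ 2) with hN_def
  set D : ℝ → ℝ := fun T => 2 * (1 + m ^ 2) * Real.exp (T * s) ^ 2 with hD_def
  have hb : HasDerivAt (fun T : ℝ => Real.exp (T * s)) s 0 := by
    have h1 : HasDerivAt (fun T : ℝ => T * s) s 0 := hasDerivAt_mul_const s
    simpa using h1.exp
  have hb2 : HasDerivAt (fun T : ℝ => Real.exp (T * s) ^ 2) (2 * s) 0 := by
    simpa using hb.fun_pow 2
  have hb4 : HasDerivAt (fun T : ℝ => Real.exp (T * s) ^ 4) (4 * s) 0 := by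
    simpa using hb.fun_pow 4
  have hC : HasDerivAt (fun T : ℝ =>
      m ^ 2 * Real.exp (T * s) ^ 4 + 2 * m ^ 2 * Real.exp (T * s) ^ 2 +
        4 * Real.exp (T * s) ^ 2 + m ^ 2)
      (m ^ 2 * (4 * s) + 2 * m ^ 2 * (2 * s) + 4 * (2 * s)) 0 := by
    simpa using (((hb4.const_mul (m ^ 2)).add (hb2.const_mul (2 * m ^ 2))).add
      (hb2.const_mul 4)).add_const (m ^ 2)
  have hC0 : (m ^ 2 * Real.exp ((0:ℝ) * s) ^ 4 + 2 * m ^ 2 * Real.exp ((0:ℝ) * s) ^ 2 +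
      4 * Real.exp ((0:ℝ) * s) ^ 2 + m ^ 2) = 4 * s ^ 2 := by
    simp [hs2]; ring
  have hsqrtC0 : Real.sqrt (4 * s ^ 2) = 2 * s := by
    rw [show (4 : ℝ) * s ^ 2 = (2 * s) ^ 2 by ring, Real.sqrt_sq (by positivity)]
  have hsq : HasDerivAt (fun T : ℝ =>
      Real.sqrt (m ^ 2 * Real.exp (T * s) ^ 4 + 2 * m ^ 2 * Real.exp (T * s) ^ 2 +
        4 * Real.exp (T * s) ^ 2 + m ^ 2))
      ((m ^ 2 * (4 * s) + 2 * m ^ 2 * (2 * s) + 4 * (2 * s)) / (2 * (2 * s))) 0 := by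
    have := hC.sqrt (by rw [hC0]; positivity)
    rwa [hC0, hsqrtC0] at this
  have hN : HasDerivAt N
      (m ^ 2 * (4 * s) + 2 * (2 * s) +
        (m * (2 * s) * (2 * s) +
          m * (Real.exp ((0:ℝ) * s) ^ 2 - 1) *
            ((m ^ 2 * (4 * s) + 2 * m ^ 2 * (2 * s) + 4 * (2 * s)) / (2 * (2 * s))))) 0 := by
    have h1 := ((hb4.const_mul (m ^ 2)).add (hb2.const_mul 2)).add_const (m ^ 2)
    have h2 := ((hb2.sub_const 1).const_mul m).mul hsq
    have := h1.add h2
    rw [hC0, hsqrtC0] at this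
    exact this
  have hD : HasDerivAt D (2 * (1 + m ^ 2) * (2 * s)) 0 := by
    simpa using hb2.const_mul (2 * (1 + m ^ 2))
  have hN0 : N 0 = 2 * s ^ 2 := by simp [hN_def, hs2]; ring
  have hD0 : D 0 = 2 * s ^ 2 := by simp [hD_def, hs2]
  have hD0ne : D 0 ≠ 0 := by rw [hD0]; positivity
  have hg : HasDerivAt (fun T => N T / D T) (2 * m) 0 := by
    have := hN.div hD hD0ne
    refine this.congr_deriv (Eq.symm ?_)
    rw [hN0, hD0]
    simp only [zero_mul, Real.exp_zero, one_pow]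
    rw [show (1:ℝ) + m ^ 2 = s ^ 2 from hs2.symm]
    field_simp
    linear_combination (16 * s) * hs2
  have hf : HasDerivAt (fun T => Real.log (N T / D T)) (2 * m) 0 := by
    have hne : N 0 / D 0 ≠ 0 := by
      rw [hN0, hD0]; positivity
    have := hg.log hne
    convert this using 1
    rw [hN0, hD0, div_self (by positivity : (2:ℝ) * s ^ 2 ≠ 0), div_one]
  have hslope : Tendsto (fun T => (1 / T) * Real.log (N T / D T)) (nhdsWithin 0 (Set.Ioi 0))
      (nhds (2 * m)) := by
    have h0 : Real.log (N 0 / D 0) = 0 := by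
      rw [hN0, hD0, div_self (by positivity : (2:ℝ) * s ^ 2 ≠ 0), Real.log_one]
    have := hasDerivAt_iff_tendsto_slope.mp hf
    have h2 := this.mono_left (nhdsWithin_mono 0 (fun x hx => ne_of_gt hx))
    refine h2.congr (fun T => ?_)
    simp [slope, h0]
  have : Tendsto (fun T => (1 / T) * Real.log (N T / D T) - 2 * (m + ε))
      (nhdsWithin 0 (Set.Ioi 0)) (nhds (2 * m - 2 * (m + ε))) := hslope.sub_const _
  have heq : (2 : ℝ) * m - 2 * (m + ε) = -(2 * ε) := by ring
  rw [heq] at this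
  exact this.congr (fun T => by simp only [Gval, hN_def, hD_def, hs_def])

lemma part2 (ε T : ℝ) (hT : 0 < T) :
    Filter.Tendsto (fun m => Gval ε m T) (nhdsWithin 0 (Set.Ioi 0))
      (nhds (-(2 * ε))) := by
  set A : ℝ → ℝ := fun m =>
    (m ^ 2 * Real.exp (T * Real.sqrt (1 + m ^ 2)) ^ 4 +
        2 * Real.exp (T * Real.sqrt (1 + m ^ 2)) ^ 2 + m ^ 2 +
      m * (Real.exp (T * Real.sqrt (1 + m ^ 2)) ^ 2 - 1) *
        Real.sqrt (m ^ 2 * Real.exp (T * Real.sqrt (1 + m ^ 2)) ^ 4 +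
          2 * m ^ 2 * Real.exp (T * Real.sqrt (1 + m ^ 2)) ^ 2 +
          4 * Real.exp (T * Real.sqrt (1 + m ^ 2)) ^ 2 + m ^ 2)) /
      (2 * (1 + m ^ 2) * Real.exp (T * Real.sqrt (1 + m ^ 2)) ^ 2) with hA_def
  have hc : ContinuousAt A 0 := by
    apply ContinuousAt.div
    · fun_prop
    · fun_prop
    · positivity
  have hA0 : A 0 = 1 := by
    simp [hA_def, Real.sqrt_one]
  have hA1 : Tendsto A (nhds 0) (nhds 1) := hA0 ▸ hc.tendsto
  have hlog : Tendsto (fun m => Real.log (A m)) (nhds 0) (nhds 0) := by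
    have := (Real.continuousAt_log one_ne_zero).tendsto.comp hA1
    simpa [Function.comp_def] using this
  have h2 : Tendsto (fun m : ℝ => (1 / T) * Real.log (A m) - 2 * (m + ε)) (nhds 0)
      (nhds ((1 / T) * 0 - 2 * (0 + ε))) :=
    ((hlog.const_mul (1 / T)).sub (((continuous_id.add continuous_const).tendsto 0).const_mul 2))
  have heq : (1 / T) * 0 - 2 * ((0:ℝ) + ε) = -(2 * ε) := by ring
  rw [heq] at h2
  exact (h2.mono_left nhdsWithin_le_nhds).congr (fun m => by simp only [Gval, hA_def])

lemma part3 (ε T : ℝ) (hT : 0 < T) :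
    Filter.Tendsto (fun m => Gval ε m T) Filter.atTop (nhds (-(2 * ε))) := by
  set s : ℝ → ℝ := fun m => Real.sqrt (1 + m ^ 2) with hs_def
  set e : ℝ → ℝ := fun m => Real.exp (T * s m) with he_def
  set I : ℝ → ℝ := fun m => 1 + 2 / e m ^ 2 + 4 / (m ^ 2 * e m ^ 2) + 1 / e m ^ 4 with hI_def
  set P : ℝ → ℝ := fun m => m ^ 2 / (2 * (1 + m ^ 2)) with hP_def
  set B : ℝ → ℝ := fun m =>
    1 + 2 / (m ^ 2 * e m ^ 2) + 1 / e m ^ 4 + (1 - 1 / e m ^ 2) * Real.sqrt (I m) with hB_def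
  have he_pos : ∀ m, 0 < e m := fun m => Real.exp_pos _
  -- basic atTop facts
  have hs_top : Tendsto s atTop atTop := by
    apply tendsto_atTop_mono' atTop ?_ tendsto_id
    filter_upwards [eventually_ge_atTop (0:ℝ)] with m hm
    show m ≤ s m
    calc m = Real.sqrt (m ^ 2) := (Real.sqrt_sq hm).symm
    _ ≤ s m := Real.sqrt_le_sqrt (by linarith)
  have he_top : Tendsto e atTop atTop :=
    Real.tendsto_exp_atTop.comp (hs_top.const_mul_atTop hT)
  have he2_top : Tendsto (fun m => e m ^ 2) atTop atTop := (tendsto_pow_atTop two_ne_zero).comp he_top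
  have he4_top : Tendsto (fun m => e m ^ 4) atTop atTop := (tendsto_pow_atTop four_ne_zero).comp he_top
  have hm2e2_top : Tendsto (fun m => m ^ 2 * e m ^ 2) atTop atTop :=
    (tendsto_pow_atTop two_ne_zero).atTop_mul_atTop₀ he2_top
  have hinv2 : Tendsto (fun m => 1 / e m ^ 2) atTop (nhds 0) :=
    he2_top.inv_tendsto_atTop.congr fun m => (one_div _).symm
  have hinv4 : Tendsto (fun m => 1 / e m ^ 4) atTop (nhds 0) :=
    he4_top.inv_tendsto_atTop.congr fun m => (one_div _).symm
  have hinvm2e2 : Tendsto (fun m => 1 / (m ^ 2 * e m ^ 2)) atTop (nhds 0) :=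
    hm2e2_top.inv_tendsto_atTop.congr fun m => (one_div _).symm
  -- I → 1
  have h2e : Tendsto (fun m => 2 / e m ^ 2) atTop (nhds 0) := by
    have h := hinv2.const_mul (2:ℝ)
    rw [mul_zero] at h
    exact h.congr fun m => by rw [mul_one_div]
  have h4me : Tendsto (fun m => 4 / (m ^ 2 * e m ^ 2)) atTop (nhds 0) := by
    have h := hinvm2e2.const_mul (4:ℝ)
    rw [mul_zero] at h
    exact h.congr fun m => by rw [mul_one_div]
  have h2me : Tendsto (fun m => 2 / (m ^ 2 * e m ^ 2)) atTop (nhds 0) := by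
    have h := hinvm2e2.const_mul (2:ℝ)
    rw [mul_zero] at h
    exact h.congr fun m => by rw [mul_one_div]
  have hI1 : Tendsto I atTop (nhds 1) := by
    have h := (((tendsto_const_nhds (x := (1:ℝ))).add h2e).add h4me).add hinv4
    rw [show (1:ℝ) + 0 + 0 + 0 = 1 by norm_num] at h
    exact h
  have hsqrtI : Tendsto (fun m => Real.sqrt (I m)) atTop (nhds 1) := by
    have := (Real.continuous_sqrt.tendsto 1).comp hI1
    simpa [Real.sqrt_one, Function.comp_def] using this
  -- B → 2
  have hB2 : Tendsto B atTop (nhds 2) := by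
    have hfac : Tendsto (fun m => (1 - 1 / e m ^ 2) * Real.sqrt (I m)) atTop (nhds 1) := by
      have h := ((tendsto_const_nhds (x := (1:ℝ))).sub hinv2).mul hsqrtI
      rw [show ((1:ℝ) - 0) * 1 = 1 by norm_num] at h
      exact h
    have h := (((tendsto_const_nhds (x := (1:ℝ))).add h2me).add hinv4).add hfac
    rw [show (1:ℝ) + 0 + 0 + 1 = 2 by norm_num] at h
    exact h
  -- P → 1/2
  have hP12 : Tendsto P atTop (nhds (1/2)) := by
    have hd1 : Tendsto (fun m : ℝ => 1 + m ^ 2) atTop atTop :=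
      tendsto_atTop_add_const_left atTop 1 (tendsto_pow_atTop two_ne_zero)
    have hd : Tendsto (fun m : ℝ => 2 * (1 + m ^ 2)) atTop atTop :=
      hd1.const_mul_atTop (by norm_num : (0:ℝ) < 2)
    have h0 := hd.inv_tendsto_atTop
    have := (tendsto_const_nhds (x := (1/2:ℝ))).sub h0
    rw [sub_zero] at this
    refine this.congr (fun m => ?_)
    simp only [Pi.inv_apply]
    rw [hP_def]
    field_simp
    ring
  -- R = P * B → 1, log → 0
  have hR : Tendsto (fun m => P m * B m) atTop (nhds 1) := by
    have h := hP12.mul hB2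
    rw [show (1:ℝ)/2 * 2 = 1 by norm_num] at h
    exact h
  have hlogR : Tendsto (fun m => Real.log (P m * B m)) atTop (nhds 0) := by
    have := (Real.continuousAt_log one_ne_zero).tendsto.comp hR
    simpa [Function.comp_def] using this
  -- s m - m → 0
  have hdiff : Tendsto (fun m => s m - m) atTop (nhds 0) := by
    have hub : Tendsto (fun m : ℝ => 1 / m) atTop (nhds 0) := by
      simpa [one_div] using tendsto_inv_atTop_zero (𝕜 := ℝ)
    apply tendsto_of_tendsto_of_tendsto_of_le_of_le' tendsto_const_nhds hub
    · filter_upwards [eventually_ge_atTop (0:ℝ)] with m hm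
      have : m ≤ s m := by
        calc m = Real.sqrt (m ^ 2) := (Real.sqrt_sq hm).symm
        _ ≤ s m := Real.sqrt_le_sqrt (by linarith)
      linarith
    · filter_upwards [eventually_ge_atTop (1:ℝ)] with m hm
      have hm0 : 0 < m := lt_of_lt_of_le one_pos hm
      have : s m ≤ m + 1 / m := by
        calc s m ≤ Real.sqrt ((m + 1 / m) ^ 2) := by
              apply Real.sqrt_le_sqrt
              have h : (m + 1/m)^2 = m^2 + 2 + 1/m^2 := by field_simp; ring
              rw [h]
              have : 1/m^2 ≥ 0 := by positivity
              linarith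
        _ = m + 1 / m := Real.sqrt_sq (by positivity)
      linarith
  -- main eventual equality
  have hkey : ∀ᶠ m in atTop, Gval ε m T =
      (1 / T) * Real.log (P m * B m) + 2 * (s m - m) - 2 * ε := by
    filter_upwards [eventually_ge_atTop (1:ℝ)] with m hm
    have hm0 : 0 < m := lt_of_lt_of_le one_pos hm
    have hs2 : s m ^ 2 = 1 + m ^ 2 := Real.sq_sqrt (by positivity)
    have hs0 : 0 < s m := Real.sqrt_pos.mpr (by positivity)
    have hb0 : 0 < e m := he_pos m
    have hb1 : 1 < e m := by
      rw [he_def]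
      exact Real.one_lt_exp_iff.mpr (by positivity)
    have hI0 : 0 < I m := by rw [hI_def]; positivity
    -- sqrt C factorization
    have hsqC : Real.sqrt (m ^ 2 * e m ^ 4 + 2 * m ^ 2 * e m ^ 2 + 4 * e m ^ 2 + m ^ 2)
        = m * e m ^ 2 * Real.sqrt (I m) := by
      have h1 : m ^ 2 * e m ^ 4 + 2 * m ^ 2 * e m ^ 2 + 4 * e m ^ 2 + m ^ 2
          = (m * e m ^ 2) ^ 2 * I m := by
        rw [hI_def]; field_simp
      rw [h1, Real.sqrt_mul (sq_nonneg _), Real.sqrt_sq (by positivity)]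
    have h1b : (0:ℝ) ≤ 1 - 1 / e m ^ 2 := by
      have : 1 / e m ^ 2 ≤ 1 := by
        rw [div_le_one (by positivity)]
        nlinarith
      linarith
    have hB0 : 0 < B m := by
      have h1 : 0 ≤ (1 - 1 / e m ^ 2) * Real.sqrt (I m) :=
        mul_nonneg h1b (Real.sqrt_nonneg _)
      have h2 : 0 ≤ 2 / (m ^ 2 * e m ^ 2) := by positivity
      have h3 : 0 ≤ 1 / e m ^ 4 := by positivity
      rw [hB_def]
      dsimp only
      linarith
    have hP0 : 0 < P m := by rw [hP_def]; positivity
    have harg : (m ^ 2 * e m ^ 4 + 2 * e m ^ 2 + m ^ 2 +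
        m * (e m ^ 2 - 1) * Real.sqrt (m ^ 2 * e m ^ 4 + 2 * m ^ 2 * e m ^ 2 +
          4 * e m ^ 2 + m ^ 2)) / (2 * (1 + m ^ 2) * e m ^ 2)
        = (P m * B m) * e m ^ 2 := by
      rw [hsqC, hP_def, hB_def]
      dsimp only
      field_simp
    show (1 / T) * Real.log ((m ^ 2 * e m ^ 4 + 2 * e m ^ 2 + m ^ 2 +
        m * (e m ^ 2 - 1) * Real.sqrt (m ^ 2 * e m ^ 4 + 2 * m ^ 2 * e m ^ 2 +
          4 * e m ^ 2 + m ^ 2)) / (2 * (1 + m ^ 2) * e m ^ 2)) - 2 * (m + ε)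
        = (1 / T) * Real.log (P m * B m) + 2 * (s m - m) - 2 * ε
    rw [harg, Real.log_mul (ne_of_gt (mul_pos hP0 hB0)) (by positivity),
      Real.log_pow, he_def]
    dsimp only
    rw [Real.log_exp]
    field_simp
    ring
  -- conclude
  have hlim : Tendsto (fun m => (1 / T) * Real.log (P m * B m) + 2 * (s m - m) - 2 * ε)
      atTop (nhds ((1 / T) * 0 + 2 * 0 - 2 * ε)) :=
    ((hlogR.const_mul (1 / T)).add (hdiff.const_mul 2)).sub_const _
  have heq : (1 / T) * 0 + 2 * 0 - 2 * ε = -(2 * ε) := by ring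
  rw [heq] at hlim
  exact hlim.congr' (hkey.mono (fun m hm => hm.symm))

theorem statement11 (ε : ℝ) (hε : 0 < ε) (hε1 : ε ≤ 1) :
    (∀ m : ℝ, 0 < m →
      Filter.Tendsto (fun T => Gval ε m T) (nhdsWithin 0 (Set.Ioi 0))
        (nhds (-(2 * ε)))) ∧
    (∀ T : ℝ, 0 < T →
      Filter.Tendsto (fun m => Gval ε m T) (nhdsWithin 0 (Set.Ioi 0))
        (nhds (-(2 * ε))) ∧
      Filter.Tendsto (fun m => Gval ε m T) Filter.atTop (nhds (-(2 * ε)))) := by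
  exact ⟨fun m hm => part1 ε m hm, fun T hT => ⟨part2 ε T hT, part3 ε T hT⟩⟩
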